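/- Let S, N, Q, W be four distinct states of a medium with Nτ = S, Wμ = Q, and concise messages q, q', w, w' with Sq = Nq' = Q and Sw' = Nw = W. Then τ = μ if and only if ℓ(q) + ℓ(w) + 2 = ℓ(q') + ℓ(w'). -/

import Mathlib

variable {S : Type*}

/-- Result of applying message `m` (a list of tokens) to state `P`. -/
def mApply (m : List (S → S)) (P : S) : S := m.foldl (fun s τ => τ s) P

/-- `τ'` is a reverse of `τ`. -/
def IsReverse (τ τ' : S → S) : Prop := ∀ P Q : S, P ≠ Q → (τ P = Q ↔ τ' Q = P)

/-- `(S, T)` is a token system. -/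
def IsTokenSystem (T : Set (S → S)) : Prop :=
  Nontrivial S ∧ T.Nonempty ∧ ∀ τ ∈ T, τ ≠ id

/-- `m` is a message of the token system with token set `T`. -/
def IsMsg (T : Set (S → S)) (m : List (S → S)) : Prop := ∀ τ ∈ m, τ ∈ T

/-- `m` is stepwise effective for `P`. -/
def StepwiseEff : List (S → S) → S → Prop
  | [], _ => True
  | τ :: rest, P => τ P ≠ P ∧ StepwiseEff rest (τ P)

/-- `m` is consistent: it contains no token together with a reverse of it. -/
def Consistent (m : List (S → S)) : Prop :=
  ∀ τ ∈ m, ∀ τ' ∈ m, ¬ IsReverse τ τ'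

/-- `m` is concise for `P`. -/
def Concise (T : Set (S → S)) (m : List (S → S)) (P : S) : Prop :=
  IsMsg T m ∧ Consistent m ∧ StepwiseEff m P ∧ m.Nodup

/-- `m` is a return message for `P`. -/
def IsReturn (m : List (S → S)) (P : S) : Prop :=
  StepwiseEff m P ∧ mApply m P = P

/-- `m` is vacuous: its indices partition into pairs of mutually reverse tokens. -/
def Vacuous (m : List (S → S)) : Prop :=
  ∃ σ : Equiv.Perm (Fin m.length),
    (∀ i, σ i ≠ i) ∧ (∀ i, σ (σ i) = i) ∧
    ∀ i, IsReverse (m.get i) (m.get (σ i))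

/-- `(S, T)` is a medium: token system satisfying [Ma] and [Mb]. -/
def IsMedium (T : Set (S → S)) : Prop :=
  IsTokenSystem T ∧
  (∀ P Q : S, P ≠ Q → ∃ m, Concise T m P ∧ mApply m P = Q) ∧
  (∀ (m : List (S → S)) (P : S), IsMsg T m → IsReturn m P → Vacuous m)

/-- Content of a message: its set of tokens. -/
def msgContent (m : List (S → S)) : Set (S → S) := {τ | τ ∈ m}

/-- Token content of a state `P`. -/
def SContent (T : Set (S → S)) (P : S) : Set (S → S) :=
  {τ | ∃ (V : S) (m : List (S → S)), Concise T m V ∧ mApply m V = P ∧ τ ∈ m}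

/-- `mr` is the reverse message `τ̃ₙ…τ̃₁` of `m = τ₁…τₙ`. -/
def IsReverseOfMsg (m mr : List (S → S)) : Prop :=
  List.Forall₂ (fun τ τ' => IsReverse τ τ' ∧ IsReverse τ' τ) m mr.reverse

-- Part 1: basic lemmas
lemma mApply_append (A B : List (S → S)) (P : S) :
    mApply (A ++ B) P = mApply B (mApply A P) := by
  simp [mApply, List.foldl_append]

lemma mApply_cons (x : S → S) (A : List (S → S)) (P : S) :
    mApply (x :: A) P = mApply A (x P) := rfl

lemma se_append {A B : List (S → S)} {P : S} (hA : StepwiseEff A P)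
    (hB : StepwiseEff B (mApply A P)) : StepwiseEff (A ++ B) P := by
  induction A generalizing P with
  | nil => simpa [mApply] using hB
  | cons x A ih =>
    exact ⟨hA.1, ih hA.2 (by simpa [mApply_cons] using hB)⟩

lemma reverse_unique {x y z : S → S} (h1 : IsReverse x y) (h2 : IsReverse x z) :
    y = z := by
  funext R
  rcases eq_or_ne (z R) R with hz | hz
  · by_contra hne
    rw [hz] at hne
    have hx : x (y R) = R := (h1 (y R) R hne).mpr rfl
    have := (h2 (y R) R hne).mp hx
    exact hne (this.symm.trans hz)
  · exact (h1 _ _ hz).mp ((h2 _ _ hz).mpr rfl)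

lemma count_eq {n : ℕ} (σ : Equiv.Perm (Fin n)) (I J : Finset (Fin n))
    (hIJ : ∀ i ∈ I, σ i ∈ J) (hJI : ∀ j ∈ J, σ j ∈ I) : I.card = J.card :=
  le_antisymm (Finset.card_le_card_of_injOn σ hIJ σ.injective.injOn)
    (Finset.card_le_card_of_injOn σ hJI σ.injective.injOn)

lemma card_filter_lt {n k : ℕ} (hk : k ≤ n) :
    ((Finset.univ : Finset (Fin n)).filter (fun i : Fin n => (i : ℕ) < k)).card = k := by
  apply Finset.card_eq_of_bijective (fun i h => (⟨i, lt_of_lt_of_le h hk⟩ : Fin n))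
  · intro a ha
    simp only [Finset.mem_filter] at ha
    exact ⟨a.1, ha.2, by simp⟩
  · intro i h
    simp [h]
  · intro i j hi hj hij
    simpa using congrArg Fin.val hij

lemma card_filter_sum {n : ℕ} (p : Fin n → Prop) [DecidablePred p] :
    ((Finset.univ : Finset (Fin n)).filter p).card
      + ((Finset.univ : Finset (Fin n)).filter (fun i => ¬ p i)).card = n := by
  rw [Finset.card_filter_add_card_filter_not]
  simp

lemma card_filter_gt {n k : ℕ} (hk : k < n) :
    ((Finset.univ : Finset (Fin n)).filter (fun i : Fin n => k < (i : ℕ))).card = n - k - 1 := by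
  have h1 : ((Finset.univ : Finset (Fin n)).filter (fun i : Fin n => (i : ℕ) < k + 1)).card = k + 1 :=
    card_filter_lt hk
  have h2 := card_filter_sum (fun i : Fin n => (i : ℕ) < k + 1)
  have h3 : ((Finset.univ : Finset (Fin n)).filter (fun i : Fin n => ¬ (i : ℕ) < k + 1)).card
      = ((Finset.univ : Finset (Fin n)).filter (fun i : Fin n => k < (i : ℕ))).card := by
    congr 1
    apply Finset.filter_congr
    intro i _
    simp
  omega

lemma get_vacuous {T : Set (S → S)} (hM : IsMedium T) {m : List (S → S)} {P : S}
    (hmsg : IsMsg T m) (hse : StepwiseEff m P) (hret : mApply m P = P) :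
    Vacuous m := hM.2.2 m P hmsg ⟨hse, hret⟩

-- Part 2: shape helpers
section Shapes
variable {A B : List (S → S)} {x : S → S}

lemma mid_length : (A ++ x :: B).length = A.length + (B.length + 1) := by simp

lemma mid_get_lt {i : Fin (A ++ x :: B).length} (h : (i : ℕ) < A.length) :
    (A ++ x :: B).get i = A[(i : ℕ)]'h := by
  rw [List.get_eq_getElem]
  exact List.getElem_append_left h

lemma mid_mem_left {i : Fin (A ++ x :: B).length} (h : (i : ℕ) < A.length) :
    (A ++ x :: B).get i ∈ A := by
  rw [mid_get_lt h]; exact List.getElem_mem h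

lemma mid_get_eq {i : Fin (A ++ x :: B).length} (h : (i : ℕ) = A.length) :
    (A ++ x :: B).get i = x := by
  rw [List.get_eq_getElem, List.getElem_append_right (by omega : A.length ≤ (i : ℕ))]
  simp [h]

lemma mid_get_gt {i : Fin (A ++ x :: B).length} (h : A.length < (i : ℕ)) :
    ∃ (hh : (i : ℕ) - A.length - 1 < B.length),
      (A ++ x :: B).get i = B[(i : ℕ) - A.length - 1]'hh := by
  have hi : (i : ℕ) < A.length + (B.length + 1) := by simpa using i.2
  refine ⟨by omega, ?_⟩
  rw [List.get_eq_getElem, List.getElem_append_right (by omega : A.length ≤ (i : ℕ))]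
  obtain ⟨k, hk⟩ : ∃ k, (i : ℕ) - A.length = k + 1 := ⟨(i : ℕ) - A.length - 1, by omega⟩
  have h2 : (i : ℕ) - A.length - 1 = k := by omega
  simp only [h2, hk, List.getElem_cons_succ, Nat.add_sub_cancel]

lemma mid_mem_right {i : Fin (A ++ x :: B).length} (h : A.length < (i : ℕ)) :
    (A ++ x :: B).get i ∈ B := by
  obtain ⟨hh, he⟩ := mid_get_gt h
  rw [he]; exact List.getElem_mem hh

lemma mid_inj_left (hA : A.Nodup) {i j : Fin (A ++ x :: B).length}
    (hi : (i : ℕ) < A.length) (hj : (j : ℕ) < A.length)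
    (h : (A ++ x :: B).get i = (A ++ x :: B).get j) : i = j := by
  rw [mid_get_lt hi, mid_get_lt hj] at h
  exact Fin.ext (hA.getElem_inj_iff.mp h)

lemma mid_inj_right (hB : B.Nodup) {i j : Fin (A ++ x :: B).length}
    (hi : A.length < (i : ℕ)) (hj : A.length < (j : ℕ))
    (h : (A ++ x :: B).get i = (A ++ x :: B).get j) : i = j := by
  obtain ⟨hhi, hei⟩ := mid_get_gt hi
  obtain ⟨hhj, hej⟩ := mid_get_gt hj
  rw [hei, hej] at h
  have := hB.getElem_inj_iff.mp h
  exact Fin.ext (by omega)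

-- front shape : x :: A ++ B
lemma front_length : (x :: (A ++ B)).length = A.length + B.length + 1 := by simp

lemma front_get_zero {i : Fin (x :: (A ++ B)).length} (h : (i : ℕ) = 0) :
    (x :: (A ++ B)).get i = x := by
  have hi : i = ⟨0, by simp⟩ := Fin.ext h
  rw [hi]
  rfl

lemma front_get_left {i : Fin (x :: (A ++ B)).length} (h0 : 0 < (i : ℕ))
    (h : (i : ℕ) < A.length + 1) :
    ∃ (hh : (i : ℕ) - 1 < A.length), (x :: (A ++ B)).get i = A[(i : ℕ) - 1]'hh := by
  refine ⟨by omega, ?_⟩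
  rw [List.get_eq_getElem]
  obtain ⟨k, hk⟩ : ∃ k, (i : ℕ) = k + 1 := ⟨(i : ℕ) - 1, by omega⟩
  simp_rw [hk]
  rw [List.getElem_cons_succ]
  simp only [Nat.add_sub_cancel]
  exact List.getElem_append_left (show k < A.length from by omega)

lemma front_mem_left {i : Fin (x :: (A ++ B)).length} (h0 : 0 < (i : ℕ))
    (h : (i : ℕ) < A.length + 1) : (x :: (A ++ B)).get i ∈ A := by
  obtain ⟨hh, he⟩ := front_get_left h0 h
  rw [he]; exact List.getElem_mem hh

lemma front_get_right {i : Fin (x :: (A ++ B)).length} (h : A.length + 1 ≤ (i : ℕ)) :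
    ∃ (hh : (i : ℕ) - A.length - 1 < B.length),
      (x :: (A ++ B)).get i = B[(i : ℕ) - A.length - 1]'hh := by
  have hi : (i : ℕ) < A.length + B.length + 1 := by simpa using i.2
  refine ⟨by omega, ?_⟩
  rw [List.get_eq_getElem]
  obtain ⟨k, hk⟩ : ∃ k, (i : ℕ) = k + 1 := ⟨(i : ℕ) - 1, by omega⟩
  simp_rw [hk]
  rw [List.getElem_cons_succ]
  rw [List.getElem_append_right (by omega : A.length ≤ k)]
  simp only [show k + 1 - A.length - 1 = k - A.length from by omega]

lemma front_mem_right {i : Fin (x :: (A ++ B)).length} (h : A.length + 1 ≤ (i : ℕ)) :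
    (x :: (A ++ B)).get i ∈ B := by
  obtain ⟨hh, he⟩ := front_get_right h
  rw [he]; exact List.getElem_mem hh

end Shapes

-- Part 3: counting lemmas
section Count
variable {A B : List (S → S)} {x : S → S}

lemma vac_mid_count_left
    (σ : Equiv.Perm (Fin (A ++ x :: B).length))
    (hinv : ∀ i, σ (σ i) = i)
    (hrev : ∀ i, IsReverse ((A ++ x :: B).get i) ((A ++ x :: B).get (σ i)))
    (hAc : Consistent A) (hBc : Consistent B)
    {p j : Fin (A ++ x :: B).length} (hp : (p : ℕ) = A.length)
    (hj : σ p = j) (hjlt : (j : ℕ) < A.length) : A.length = B.length + 1 := by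
  have hnl : (A ++ x :: B).length = A.length + (B.length + 1) := by simp
  set I : Finset (Fin (A ++ x :: B).length) :=
    (Finset.univ.filter (fun i : Fin (A ++ x :: B).length => (i : ℕ) < A.length)).erase j with hI
  set J : Finset (Fin (A ++ x :: B).length) :=
    Finset.univ.filter (fun i : Fin (A ++ x :: B).length => A.length < (i : ℕ)) with hJ
  have hmapsIJ : ∀ i ∈ I, σ i ∈ J := by
    intro i hi
    rw [hI, Finset.mem_erase, Finset.mem_filter] at hi
    obtain ⟨hij, _, hilt⟩ := hi
    rw [hJ, Finset.mem_filter]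
    refine ⟨Finset.mem_univ _, ?_⟩
    rcases lt_trichotomy ((σ i : Fin _) : ℕ) A.length with h | h | h
    · exact absurd (hrev i) (hAc _ (mid_mem_left hilt) _ (mid_mem_left h))
    · have h1 : σ i = p := Fin.ext (by rw [h, hp])
      have h2 : i = j := by rw [← hj, ← h1, hinv]
      exact absurd h2 hij
    · exact h
  have hmapsJI : ∀ i ∈ J, σ i ∈ I := by
    intro i hi
    rw [hJ, Finset.mem_filter] at hi
    obtain ⟨_, higt⟩ := hi
    rw [hI, Finset.mem_erase, Finset.mem_filter]
    have hσne : σ i ≠ j := by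
      intro hh
      have h1 : i = σ j := by rw [← hh, hinv]
      have h2 : σ j = p := by rw [← hj, hinv]
      rw [h2] at h1
      rw [h1, hp] at higt
      omega
    rcases lt_trichotomy ((σ i : Fin _) : ℕ) A.length with h | h | h
    · exact ⟨hσne, Finset.mem_univ _, h⟩
    · have h1 : σ i = p := Fin.ext (by rw [h, hp])
      have h2 : i = j := by rw [← hj, ← h1, hinv]
      rw [h2] at higt
      omega
    · exact absurd (hrev i) (hBc _ (mid_mem_right higt) _ (mid_mem_right h))
  have hcount := count_eq σ I J hmapsIJ hmapsJI
  have hjmem : j ∈ Finset.univ.filter (fun i : Fin (A ++ x :: B).length => (i : ℕ) < A.length) := by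
    rw [Finset.mem_filter]; exact ⟨Finset.mem_univ _, hjlt⟩
  have c1 : (Finset.univ.filter (fun i : Fin (A ++ x :: B).length => (i : ℕ) < A.length)).card
      = A.length := card_filter_lt (by omega)
  have c2 : J.card = (A ++ x :: B).length - A.length - 1 := card_filter_gt (by omega)
  have c3 : I.card = A.length - 1 := by rw [hI, Finset.card_erase_of_mem hjmem, c1]
  omega

lemma vac_mid_count_right
    (σ : Equiv.Perm (Fin (A ++ x :: B).length))
    (hinv : ∀ i, σ (σ i) = i)
    (hrev : ∀ i, IsReverse ((A ++ x :: B).get i) ((A ++ x :: B).get (σ i)))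
    (hAc : Consistent A) (hBc : Consistent B)
    {p j : Fin (A ++ x :: B).length} (hp : (p : ℕ) = A.length)
    (hj : σ p = j) (hjgt : A.length < (j : ℕ)) : B.length = A.length + 1 := by
  have hnl : (A ++ x :: B).length = A.length + (B.length + 1) := by simp
  set I : Finset (Fin (A ++ x :: B).length) :=
    Finset.univ.filter (fun i : Fin (A ++ x :: B).length => (i : ℕ) < A.length) with hI
  set J : Finset (Fin (A ++ x :: B).length) :=
    (Finset.univ.filter (fun i : Fin (A ++ x :: B).length => A.length < (i : ℕ))).erase j with hJ
  have hmapsIJ : ∀ i ∈ I, σ i ∈ J := by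
    intro i hi
    rw [hI, Finset.mem_filter] at hi
    obtain ⟨_, hilt⟩ := hi
    rw [hJ, Finset.mem_erase, Finset.mem_filter]
    have hσne : σ i ≠ j := by
      intro hh
      have h1 : i = σ j := by rw [← hh, hinv]
      have h2 : σ j = p := by rw [← hj, hinv]
      rw [h2] at h1
      rw [h1, hp] at hilt
      omega
    rcases lt_trichotomy ((σ i : Fin _) : ℕ) A.length with h | h | h
    · exact absurd (hrev i) (hAc _ (mid_mem_left hilt) _ (mid_mem_left h))
    · have h1 : σ i = p := Fin.ext (by rw [h, hp])
      have h2 : i = j := by rw [← hj, ← h1, hinv]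
      rw [h2] at hilt
      omega
    · exact ⟨hσne, Finset.mem_univ _, h⟩
  have hmapsJI : ∀ i ∈ J, σ i ∈ I := by
    intro i hi
    rw [hJ, Finset.mem_erase, Finset.mem_filter] at hi
    obtain ⟨hij, _, higt⟩ := hi
    rw [hI, Finset.mem_filter]
    refine ⟨Finset.mem_univ _, ?_⟩
    rcases lt_trichotomy ((σ i : Fin _) : ℕ) A.length with h | h | h
    · exact h
    · have h1 : σ i = p := Fin.ext (by rw [h, hp])
      have h2 : i = j := by rw [← hj, ← h1, hinv]
      exact absurd h2 hij
    · exact absurd (hrev i) (hBc _ (mid_mem_right higt) _ (mid_mem_right h))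
  have hcount := count_eq σ I J hmapsIJ hmapsJI
  have hjmem : j ∈ Finset.univ.filter (fun i : Fin (A ++ x :: B).length => A.length < (i : ℕ)) := by
    rw [Finset.mem_filter]; exact ⟨Finset.mem_univ _, hjgt⟩
  have c1 : I.card = A.length := card_filter_lt (by omega)
  have c2 : (Finset.univ.filter (fun i : Fin (A ++ x :: B).length => A.length < (i : ℕ))).card
      = (A ++ x :: B).length - A.length - 1 := card_filter_gt (by omega)
  have c3 : J.card = (A ++ x :: B).length - A.length - 1 - 1 := by
    rw [hJ, Finset.card_erase_of_mem hjmem, c2]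
  have hjn := j.2
  omega

end Count

-- Part 4: front counting lemmas
section CountF
variable {A B : List (S → S)} {x : S → S}

lemma vac_front_count_left
    (σ : Equiv.Perm (Fin (x :: (A ++ B)).length))
    (hinv : ∀ i, σ (σ i) = i)
    (hrev : ∀ i, IsReverse ((x :: (A ++ B)).get i) ((x :: (A ++ B)).get (σ i)))
    (hAc : Consistent A) (hBc : Consistent B)
    {p j : Fin (x :: (A ++ B)).length} (hp : (p : ℕ) = 0)
    (hj : σ p = j) (hj0 : 0 < (j : ℕ)) (hjlt : (j : ℕ) < A.length + 1) :
    A.length = B.length + 1 := by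
  have hnl : (x :: (A ++ B)).length = A.length + B.length + 1 := front_length
  set I : Finset (Fin (x :: (A ++ B)).length) :=
    ((Finset.univ.filter (fun i : Fin (x :: (A ++ B)).length => (i : ℕ) < A.length + 1)).erase p).erase j with hI
  set J : Finset (Fin (x :: (A ++ B)).length) :=
    Finset.univ.filter (fun i : Fin (x :: (A ++ B)).length => A.length < (i : ℕ)) with hJ
  have hjp : j ≠ p := by intro hh; rw [hh, hp] at hj0; omega
  have hmapsIJ : ∀ i ∈ I, σ i ∈ J := by
    intro i hi
    rw [hI, Finset.mem_erase, Finset.mem_erase, Finset.mem_filter] at hi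
    obtain ⟨hij, hip, _, hilt⟩ := hi
    have hi0 : 0 < (i : ℕ) := by
      rcases Nat.eq_zero_or_pos (i : ℕ) with h | h
      · exact absurd (Fin.ext (by rw [h, hp])) hip
      · exact h
    rw [hJ, Finset.mem_filter]
    refine ⟨Finset.mem_univ _, ?_⟩
    by_cases hz : ((σ i : Fin _) : ℕ) = 0
    · have h1 : σ i = p := Fin.ext (by rw [hz, hp])
      have h2 : i = j := by rw [← hj, ← h1, hinv]
      exact absurd h2 hij
    by_cases hlt : ((σ i : Fin _) : ℕ) < A.length + 1
    · exact absurd (hrev i) (hAc _ (front_mem_left hi0 hilt) _ (front_mem_left (by omega) hlt))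
    · omega
  have hmapsJI : ∀ i ∈ J, σ i ∈ I := by
    intro i hi
    rw [hJ, Finset.mem_filter] at hi
    obtain ⟨_, higt⟩ := hi
    rw [hI, Finset.mem_erase, Finset.mem_erase, Finset.mem_filter]
    by_cases hz : ((σ i : Fin _) : ℕ) = 0
    · have h1 : σ i = p := Fin.ext (by rw [hz, hp])
      have h2 : i = j := by rw [← hj, ← h1, hinv]
      rw [h2] at higt
      omega
    by_cases hlt : ((σ i : Fin _) : ℕ) < A.length + 1
    · have hσj : σ i ≠ j := by
        intro hh
        have h1 : i = σ j := by rw [← hh, hinv]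
        have h2 : σ j = p := by rw [← hj, hinv]
        rw [h2] at h1
        rw [h1, hp] at higt
        omega
      have hσp : σ i ≠ p := by intro hh; rw [hh, hp] at hz; omega
      exact ⟨hσj, hσp, Finset.mem_univ _, hlt⟩
    · exact absurd (hrev i) (hBc _ (front_mem_right (by omega) ) _ (front_mem_right (by omega)))
  have hcount := count_eq σ I J hmapsIJ hmapsJI
  have hpmem : p ∈ Finset.univ.filter (fun i : Fin (x :: (A ++ B)).length => (i : ℕ) < A.length + 1) := by
    rw [Finset.mem_filter]; exact ⟨Finset.mem_univ _, by omega⟩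
  have hjmem : j ∈ (Finset.univ.filter (fun i : Fin (x :: (A ++ B)).length => (i : ℕ) < A.length + 1)).erase p := by
    rw [Finset.mem_erase, Finset.mem_filter]; exact ⟨hjp, Finset.mem_univ _, hjlt⟩
  have c1 : (Finset.univ.filter (fun i : Fin (x :: (A ++ B)).length => (i : ℕ) < A.length + 1)).card
      = A.length + 1 := card_filter_lt (by omega)
  have c2 : J.card = (x :: (A ++ B)).length - A.length - 1 := card_filter_gt (by omega)
  have c3 : I.card = A.length + 1 - 1 - 1 := by
    rw [hI, Finset.card_erase_of_mem hjmem, Finset.card_erase_of_mem hpmem, c1]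
  omega

lemma vac_front_count_right
    (σ : Equiv.Perm (Fin (x :: (A ++ B)).length))
    (hinv : ∀ i, σ (σ i) = i)
    (hrev : ∀ i, IsReverse ((x :: (A ++ B)).get i) ((x :: (A ++ B)).get (σ i)))
    (hAc : Consistent A) (hBc : Consistent B)
    {p j : Fin (x :: (A ++ B)).length} (hp : (p : ℕ) = 0)
    (hj : σ p = j) (hjgt : A.length < (j : ℕ)) :
    B.length = A.length + 1 := by
  have hnl : (x :: (A ++ B)).length = A.length + B.length + 1 := front_length
  set I : Finset (Fin (x :: (A ++ B)).length) :=
    (Finset.univ.filter (fun i : Fin (x :: (A ++ B)).length => (i : ℕ) < A.length + 1)).erase p with hI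
  set J : Finset (Fin (x :: (A ++ B)).length) :=
    (Finset.univ.filter (fun i : Fin (x :: (A ++ B)).length => A.length < (i : ℕ))).erase j with hJ
  have hjp : j ≠ p := by intro hh; rw [hh, hp] at hjgt; omega
  have hmapsIJ : ∀ i ∈ I, σ i ∈ J := by
    intro i hi
    rw [hI, Finset.mem_erase, Finset.mem_filter] at hi
    obtain ⟨hip, _, hilt⟩ := hi
    have hi0 : 0 < (i : ℕ) := by
      rcases Nat.eq_zero_or_pos (i : ℕ) with h | h
      · exact absurd (Fin.ext (by rw [h, hp])) hip
      · exact h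
    rw [hJ, Finset.mem_erase, Finset.mem_filter]
    by_cases hz : ((σ i : Fin _) : ℕ) = 0
    · have h1 : σ i = p := Fin.ext (by rw [hz, hp])
      have h2 : i = j := by rw [← hj, ← h1, hinv]
      rw [h2] at hilt
      omega
    by_cases hlt : ((σ i : Fin _) : ℕ) < A.length + 1
    · exact absurd (hrev i) (hAc _ (front_mem_left hi0 hilt) _ (front_mem_left (by omega) hlt))
    · have hσj : σ i ≠ j := by
        intro hh
        have h1 : i = σ j := by rw [← hh, hinv]
        have h2 : σ j = p := by rw [← hj, hinv]
        rw [h2] at h1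
        rw [h1, hp] at hi0
        omega
      exact ⟨hσj, Finset.mem_univ _, by omega⟩
  have hmapsJI : ∀ i ∈ J, σ i ∈ I := by
    intro i hi
    rw [hJ, Finset.mem_erase, Finset.mem_filter] at hi
    obtain ⟨hij, _, higt⟩ := hi
    rw [hI, Finset.mem_erase, Finset.mem_filter]
    by_cases hz : ((σ i : Fin _) : ℕ) = 0
    · have h1 : σ i = p := Fin.ext (by rw [hz, hp])
      have h2 : i = j := by rw [← hj, ← h1, hinv]
      exact absurd h2 hij
    by_cases hlt : ((σ i : Fin _) : ℕ) < A.length + 1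
    · have hσp : σ i ≠ p := by intro hh; rw [hh, hp] at hz; omega
      exact ⟨hσp, Finset.mem_univ _, hlt⟩
    · exact absurd (hrev i) (hBc _ (front_mem_right (by omega)) _ (front_mem_right (by omega)))
  have hcount := count_eq σ I J hmapsIJ hmapsJI
  have hpmem : p ∈ Finset.univ.filter (fun i : Fin (x :: (A ++ B)).length => (i : ℕ) < A.length + 1) := by
    rw [Finset.mem_filter]; exact ⟨Finset.mem_univ _, by omega⟩
  have hjmem : j ∈ Finset.univ.filter (fun i : Fin (x :: (A ++ B)).length => A.length < (i : ℕ)) := by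
    rw [Finset.mem_filter]; exact ⟨Finset.mem_univ _, hjgt⟩
  have c1 : (Finset.univ.filter (fun i : Fin (x :: (A ++ B)).length => (i : ℕ) < A.length + 1)).card
      = A.length + 1 := card_filter_lt (by omega)
  have c2 : (Finset.univ.filter (fun i : Fin (x :: (A ++ B)).length => A.length < (i : ℕ))).card
      = (x :: (A ++ B)).length - A.length - 1 := card_filter_gt (by omega)
  have c3 : I.card = A.length := by
    rw [hI, Finset.card_erase_of_mem hpmem, c1]
    omega
  have c4 : J.card = (x :: (A ++ B)).length - A.length - 1 - 1 := by
    rw [hJ, Finset.card_erase_of_mem hjmem, c2]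
  have hjn := j.2
  omega

end CountF

-- Part 5: block lemmas
lemma twoblock {T : Set (S → S)} (hM : IsMedium T) {A B : List (S → S)} {P : S}
    (hAmsg : IsMsg T A) (hAc : Consistent A) (hAse : StepwiseEff A P)
    (hBmsg : IsMsg T B) (hBc : Consistent B) (hBse : StepwiseEff B (mApply A P))
    (hret : mApply B (mApply A P) = P) :
    A.length = B.length ∧ (∀ z ∈ A, ∃ y ∈ B, IsReverse z y ∧ IsReverse y z) ∧
      (∀ z ∈ B, ∃ y ∈ A, IsReverse z y ∧ IsReverse y z) := by
  have hmsg : IsMsg T (A ++ B) := by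
    intro t ht
    rcases List.mem_append.mp ht with h | h
    exacts [hAmsg t h, hBmsg t h]
  obtain ⟨σ, hfix, hinv, hrev⟩ := get_vacuous hM hmsg (se_append hAse hBse)
      (by rw [mApply_append]; exact hret)
  have hnl : (A ++ B).length = A.length + B.length := by simp
  have memL : ∀ i : Fin (A ++ B).length, (i : ℕ) < A.length → (A ++ B).get i ∈ A := by
    intro i h
    rw [List.get_eq_getElem, List.getElem_append_left h]
    exact List.getElem_mem h
  have memR : ∀ i : Fin (A ++ B).length, A.length ≤ (i : ℕ) → (A ++ B).get i ∈ B := by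
    intro i h
    have hi : (i : ℕ) < A.length + B.length := by simpa using i.2
    rw [List.get_eq_getElem, List.getElem_append_right h]
    exact List.getElem_mem (by omega)
  have crossL : ∀ i : Fin (A ++ B).length, (i : ℕ) < A.length → A.length ≤ ((σ i : Fin _) : ℕ) := by
    intro i h
    by_contra hcon
    push_neg at hcon
    exact (hAc _ (memL i h) _ (memL _ hcon)) (hrev i)
  have crossR : ∀ i : Fin (A ++ B).length, A.length ≤ (i : ℕ) → ((σ i : Fin _) : ℕ) < A.length := by
    intro i h
    by_contra hcon
    push_neg at hcon
    exact (hBc _ (memR i h) _ (memR _ hcon)) (hrev i)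
  refine ⟨?_, ?_, ?_⟩
  · have hcount : (Finset.univ.filter (fun i : Fin (A ++ B).length => (i : ℕ) < A.length)).card
        = (Finset.univ.filter (fun i : Fin (A ++ B).length => ¬ (i : ℕ) < A.length)).card := by
      apply count_eq σ
      · intro i hi
        rw [Finset.mem_filter] at hi ⊢
        have := crossL i hi.2
        exact ⟨Finset.mem_univ _, by omega⟩
      · intro i hi
        rw [Finset.mem_filter] at hi ⊢
        exact ⟨Finset.mem_univ _, crossR i (by omega)⟩
    have c1 : (Finset.univ.filter (fun i : Fin (A ++ B).length => (i : ℕ) < A.length)).card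
        = A.length := card_filter_lt (by omega)
    have c2 := card_filter_sum (fun i : Fin (A ++ B).length => (i : ℕ) < A.length)
    have c3 : (Finset.univ.filter
          (fun i => ¬ (fun i : Fin (A ++ B).length => (i : ℕ) < A.length) i)).card
        = (Finset.univ.filter (fun i : Fin (A ++ B).length => ¬ (i : ℕ) < A.length)).card := rfl
    omega
  · intro z hz
    obtain ⟨i0, hi0, he⟩ := List.getElem_of_mem hz
    have hi0n : i0 < (A ++ B).length := by omega
    set i : Fin (A ++ B).length := ⟨i0, hi0n⟩ with hi
    have hgi : (A ++ B).get i = z := by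
      rw [List.get_eq_getElem]
      exact (List.getElem_append_left hi0).trans he
    have hcross := crossL i hi0
    refine ⟨(A ++ B).get (σ i), memR _ hcross, ?_, ?_⟩
    · rw [← hgi]; exact hrev i
    · have h := hrev (σ i)
      rwa [hinv, hgi] at h
  · intro z hz
    obtain ⟨i0, hi0, he⟩ := List.getElem_of_mem hz
    have hi0n : A.length + i0 < (A ++ B).length := by omega
    set i : Fin (A ++ B).length := ⟨A.length + i0, hi0n⟩ with hi
    have hiv : (i : ℕ) = A.length + i0 := rfl
    have hgi : (A ++ B).get i = z := by
      rw [List.get_eq_getElem]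
      rw [List.getElem_append_right (show A.length ≤ (i : ℕ) from Nat.le_add_right _ _)]
      simp only [show (i : ℕ) - A.length = i0 from by omega]
      exact he
    have hcross := crossR i (Nat.le_add_right _ _)
    refine ⟨(A ++ B).get (σ i), memL _ hcross, ?_, ?_⟩
    · rw [← hgi]; exact hrev i
    · have h := hrev (σ i)
      rwa [hinv, hgi] at h

lemma triblock_mid {T : Set (S → S)} (hM : IsMedium T) {A B : List (S → S)} {x y : S → S} {P : S}
    (hmsg : IsMsg T (A ++ x :: B)) (hAc : Consistent A) (hBc : Consistent B)
    (hse : StepwiseEff (A ++ x :: B) P) (hret : mApply (A ++ x :: B) P = P)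
    (hy : ∀ z, IsReverse x z → z = y) :
    (y ∈ A ∧ A.length = B.length + 1) ∨ (y ∈ B ∧ B.length = A.length + 1) := by
  obtain ⟨σ, hfix, hinv, hrev⟩ := get_vacuous hM hmsg hse hret
  have hnl : (A ++ x :: B).length = A.length + (B.length + 1) := by simp
  have hpb : A.length < (A ++ x :: B).length := by omega
  set p : Fin (A ++ x :: B).length := ⟨A.length, hpb⟩ with hpd
  have hpv : (p : ℕ) = A.length := rfl
  have hgp : (A ++ x :: B).get p = x := mid_get_eq hpv
  have hrp := hrev p
  rw [hgp] at hrp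
  have hgj : (A ++ x :: B).get (σ p) = y := hy _ hrp
  rcases lt_trichotomy ((σ p : Fin _) : ℕ) A.length with h | h | h
  · exact Or.inl ⟨by rw [← hgj]; exact mid_mem_left h,
      vac_mid_count_left σ hinv hrev hAc hBc hpv rfl h⟩
  · exact absurd (Fin.ext (show ((σ p : Fin _) : ℕ) = (p : ℕ) by rw [h, hpv])) (hfix p)
  · exact Or.inr ⟨by rw [← hgj]; exact mid_mem_right h,
      vac_mid_count_right σ hinv hrev hAc hBc hpv rfl h⟩

lemma triblock_front {T : Set (S → S)} (hM : IsMedium T) {A B : List (S → S)} {x y : S → S} {P : S}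
    (hmsg : IsMsg T (x :: (A ++ B))) (hAc : Consistent A) (hBc : Consistent B)
    (hse : StepwiseEff (x :: (A ++ B)) P) (hret : mApply (x :: (A ++ B)) P = P)
    (hy : ∀ z, IsReverse x z → z = y) :
    (y ∈ A ∧ A.length = B.length + 1) ∨ (y ∈ B ∧ B.length = A.length + 1) := by
  obtain ⟨σ, hfix, hinv, hrev⟩ := get_vacuous hM hmsg hse hret
  have hnl : (x :: (A ++ B)).length = A.length + B.length + 1 := front_length
  have hpb : 0 < (x :: (A ++ B)).length := by omega
  set p : Fin (x :: (A ++ B)).length := ⟨0, hpb⟩ with hpd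
  have hpv : (p : ℕ) = 0 := rfl
  have hgp : (x :: (A ++ B)).get p = x := front_get_zero hpv
  have hrp := hrev p
  rw [hgp] at hrp
  have hgj : (x :: (A ++ B)).get (σ p) = y := hy _ hrp
  have h0 : 0 < ((σ p : Fin _) : ℕ) := by
    rcases Nat.eq_zero_or_pos ((σ p : Fin _) : ℕ) with h | h
    · exact absurd (Fin.ext (show ((σ p : Fin _) : ℕ) = (p : ℕ) by rw [h, hpv])) (hfix p)
    · exact h
  by_cases hlt : ((σ p : Fin _) : ℕ) < A.length + 1
  · exact Or.inl ⟨by rw [← hgj]; exact front_mem_left h0 hlt,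
      vac_front_count_left σ hinv hrev hAc hBc hpv rfl h0 hlt⟩
  · exact Or.inr ⟨by rw [← hgj]; exact front_mem_right (by omega),
      vac_front_count_right σ hinv hrev hAc hBc hpv rfl (by omega)⟩

lemma mempair {T : Set (S → S)} (hM : IsMedium T) {A B : List (S → S)} {x z y : S → S} {P : S}
    (hmsg : IsMsg T (x :: (A ++ B))) (hAc : Consistent A)
    (hse : StepwiseEff (x :: (A ++ B)) P) (hret : mApply (x :: (A ++ B)) P = P)
    (hzA : z ∈ A) (hy : ∀ y', IsReverse z y' → y' = y) : y = x ∨ y ∈ B := by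
  obtain ⟨σ, hfix, hinv, hrev⟩ := get_vacuous hM hmsg hse hret
  have hnl : (x :: (A ++ B)).length = A.length + B.length + 1 := front_length
  obtain ⟨i0, hi0, he⟩ := List.getElem_of_mem hzA
  set i : Fin (x :: (A ++ B)).length := ⟨i0 + 1, by omega⟩ with hid
  have hiv : (i : ℕ) = i0 + 1 := rfl
  have hgi : (x :: (A ++ B)).get i = z := by
    obtain ⟨hh, hgl⟩ := front_get_left (i := i) (x := x) (B := B)
      (show 0 < (i : ℕ) by rw [hiv]; omega) (show (i : ℕ) < A.length + 1 by rw [hiv]; omega)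
    rw [hgl]
    simp only [show (i : ℕ) - 1 = i0 from by omega]
    exact he
  have hri := hrev i
  rw [hgi] at hri
  have hval : (x :: (A ++ B)).get (σ i) = y := hy _ hri
  by_cases hz0 : ((σ i : Fin _) : ℕ) = 0
  · left
    rw [← hval]
    exact front_get_zero hz0
  by_cases hlt : ((σ i : Fin _) : ℕ) < A.length + 1
  · exfalso
    have hmem : (x :: (A ++ B)).get (σ i) ∈ A := front_mem_left (by omega) hlt
    exact hAc z hzA _ hmem hri
  · right
    rw [← hval]
    exact front_mem_right (by omega)

lemma twocopy {T : Set (S → S)} (hM : IsMedium T) {A B : List (S → S)} {x y : S → S} {P : S}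
    (hmsg : IsMsg T (A ++ x :: B)) (hAc : Consistent A) (hAnd : A.Nodup) (hBnd : B.Nodup)
    (hse : StepwiseEff (A ++ x :: B) P) (hret : mApply (A ++ x :: B) P = P)
    (hxA : x ∈ A) (hy : ∀ z, IsReverse x z → z = y) : False := by
  obtain ⟨σ, hfix, hinv, hrev⟩ := get_vacuous hM hmsg hse hret
  have hnl : (A ++ x :: B).length = A.length + (B.length + 1) := by simp
  have hpb : A.length < (A ++ x :: B).length := by omega
  set p : Fin (A ++ x :: B).length := ⟨A.length, hpb⟩ with hpd
  have hpv : (p : ℕ) = A.length := rfl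
  have hgp : (A ++ x :: B).get p = x := mid_get_eq hpv
  obtain ⟨i0, hi0, he⟩ := List.getElem_of_mem hxA
  set i1 : Fin (A ++ x :: B).length := ⟨i0, by omega⟩ with hi1d
  have hi1v : (i1 : ℕ) = i0 := rfl
  have hgi1 : (A ++ x :: B).get i1 = x := by
    rw [mid_get_lt (show (i1 : ℕ) < A.length from hi0)]
    exact he
  have hrp := hrev p
  rw [hgp] at hrp
  have hri := hrev i1
  rw [hgi1] at hri
  have hv1 : (A ++ x :: B).get (σ p) = y := hy _ hrp
  have hv2 : (A ++ x :: B).get (σ i1) = y := hy _ hri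
  have hpi1 : p ≠ i1 := by
    intro hh
    have : (p : ℕ) = (i1 : ℕ) := by rw [hh]
    omega
  have hne : σ p ≠ σ i1 := fun hh => hpi1 (σ.injective hh)
  by_cases hc : σ p = i1
  · rw [hc, hgi1] at hrp
    exact hAc x hxA x hxA hrp
  have hc2 : σ i1 ≠ p := fun hh => hc (by rw [← hh, hinv])
  have region : ∀ k : Fin (A ++ x :: B).length, k ≠ p →
      ((k : ℕ) < A.length ∨ A.length < (k : ℕ)) := by
    intro k hk
    rcases lt_trichotomy ((k : ℕ)) A.length with h | h | h
    · exact Or.inl h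
    · exact absurd (Fin.ext (show ((k : ℕ)) = (p : ℕ) by rw [h, hpv])) hk
    · exact Or.inr h
  rcases region (σ p) (hfix p) with h1 | h1 <;> rcases region (σ i1) hc2 with h2 | h2
  · have hvv : (A ++ x :: B).get (σ p) = (A ++ x :: B).get (σ i1) := by rw [hv1, hv2]
    exact hne (mid_inj_left hAnd h1 h2 hvv)
  · rw [hv1] at hrp
    exact hAc x hxA y (by rw [← hv1]; exact mid_mem_left h1) hrp
  · rw [hv2] at hri
    exact hAc x hxA y (by rw [← hv2]; exact mid_mem_left h2) hri
  · have hvv : (A ++ x :: B).get (σ p) = (A ++ x :: B).get (σ i1) := by rw [hv1, hv2]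
    exact hne (mid_inj_right hBnd h1 h2 hvv)

lemma exists_reverse {T : Set (S → S)} (hM : IsMedium T) {t : S → S} (ht : t ∈ T) {P Q : S}
    (hPQ : P ≠ Q) (htP : t P = Q) :
    ∃ ρ ∈ T, IsReverse t ρ ∧ IsReverse ρ t := by
  obtain ⟨u, hu, huQ⟩ := hM.2.1 Q P (Ne.symm hPQ)
  have hmsg : IsMsg T (t :: u) := by
    intro s hs
    rcases List.mem_cons.mp hs with h | h
    · rw [h]; exact ht
    · exact hu.1 s h
  have hse : StepwiseEff (t :: u) P := by
    refine ⟨by rw [htP]; exact Ne.symm hPQ, ?_⟩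
    rw [htP]
    exact hu.2.2.1
  have hret : mApply (t :: u) P = P := by
    rw [mApply_cons, htP]
    exact huQ
  obtain ⟨σ, hfix, hinv, hrev⟩ := get_vacuous hM hmsg hse hret
  set z : Fin (t :: u).length := ⟨0, by simp⟩ with hzd
  have hgz : (t :: u).get z = t := rfl
  have h0 : 0 < ((σ z : Fin _) : ℕ) := by
    rcases Nat.eq_zero_or_pos ((σ z : Fin _) : ℕ) with h | h
    · exact absurd (Fin.ext (show ((σ z : Fin _) : ℕ) = (z : ℕ) by rw [h])) (hfix z)
    · exact h
  have htail : ∀ (l : List (S → S)) (a : S → S) (k : Fin (a :: l).length),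
      0 < (k : ℕ) → (a :: l).get k ∈ l := by
    intro l a k hk
    rw [List.get_eq_getElem]
    obtain ⟨k', hk'⟩ : ∃ k', (k : ℕ) = k' + 1 := ⟨(k : ℕ) - 1, by omega⟩
    have hb : (k : ℕ) < l.length + 1 := by simpa using k.2
    simp_rw [hk', List.getElem_cons_succ]
    exact List.getElem_mem (by omega)
  refine ⟨(t :: u).get (σ z), hu.1 _ (htail u t _ h0), ?_, ?_⟩
  · have h := hrev z
    rwa [hgz] at h
  · have h := hrev (σ z)
    rwa [hinv, hgz] at h

lemma double_mid {T : Set (S → S)} (hM : IsMedium T) {A B : List (S → S)} {x z : S → S} {P : S}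
    (hmsg : IsMsg T (A ++ x :: B)) (hAc : Consistent A) (hBc : Consistent B)
    (hse : StepwiseEff (A ++ x :: B) P) (hret : mApply (A ++ x :: B) P = P)
    (hzA : z ∈ A)
    (O1 : ∀ y', IsReverse x y' → y' = z) (O2 : ∀ y', IsReverse z y' → y' = x)
    (hxz : IsReverse x z) : A.length = B.length + 1 := by
  obtain ⟨σ, hfix, hinv, hrev⟩ := get_vacuous hM hmsg hse hret
  have hnl : (A ++ x :: B).length = A.length + (B.length + 1) := by simp
  have hpb : A.length < (A ++ x :: B).length := by omega
  set p : Fin (A ++ x :: B).length := ⟨A.length, hpb⟩ with hpd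
  have hpv : (p : ℕ) = A.length := rfl
  have hgp : (A ++ x :: B).get p = x := mid_get_eq hpv
  obtain ⟨i0, hi0, he⟩ := List.getElem_of_mem hzA
  set i1 : Fin (A ++ x :: B).length := ⟨i0, by omega⟩ with hi1d
  have hi1v : (i1 : ℕ) = i0 := rfl
  have hgi1 : (A ++ x :: B).get i1 = z := by
    rw [mid_get_lt (show (i1 : ℕ) < A.length from hi0)]
    exact he
  have hrp := hrev p
  rw [hgp] at hrp
  have hgj : (A ++ x :: B).get (σ p) = z := O1 _ hrp
  rcases lt_trichotomy ((σ p : Fin _) : ℕ) A.length with h | h | h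
  · exact vac_mid_count_left σ hinv hrev hAc hBc hpv rfl h
  · exact absurd (Fin.ext (show ((σ p : Fin _) : ℕ) = (p : ℕ) by rw [h, hpv])) (hfix p)
  · exfalso
    have hzB : z ∈ B := by rw [← hgj]; exact mid_mem_right h
    have hri := hrev i1
    rw [hgi1] at hri
    have hgk : (A ++ x :: B).get (σ i1) = x := O2 _ hri
    rcases lt_trichotomy ((σ i1 : Fin _) : ℕ) A.length with h2 | h2 | h2
    · have hxA : x ∈ A := by rw [← hgk]; exact mid_mem_left h2
      exact hAc x hxA z hzA hxz
    · have hkp : σ i1 = p := Fin.ext (by rw [h2, hpv])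
      have : i1 = σ p := by rw [← hkp, hinv]
      have hv : (i1 : ℕ) = ((σ p : Fin _) : ℕ) := by rw [this]
      omega
    · have hxB : x ∈ B := by rw [← hgk]; exact mid_mem_right h2
      exact hBc x hxB z hzB hxz

lemma isMsg_append {T : Set (S → S)} {a b : List (S → S)} (ha : IsMsg T a) (hb : IsMsg T b) :
    IsMsg T (a ++ b) := by
  intro t ht
  rcases List.mem_append.mp ht with h | h
  exacts [ha t h, hb t h]

lemma isMsg_cons {T : Set (S → S)} {x : S → S} {a : List (S → S)} (hx : x ∈ T)
    (ha : IsMsg T a) : IsMsg T (x :: a) := by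
  intro t ht
  rcases List.mem_cons.mp ht with h | h
  · rw [h]; exact hx
  · exact ha t h


/-- Theorem 5, (ii) ⇔ (iv): `τ = μ` iff `ℓ(q) + ℓ(w) + 2 = ℓ(q') + ℓ(w')`. -/
theorem stmt9 {S' : Type*} {T : Set (S' → S')} (hM : IsMedium T)
    (St N Q W : S') (τ μ : S' → S') (hτ : τ ∈ T) (hμ : μ ∈ T)
    (hd1 : St ≠ N) (hd2 : St ≠ Q) (hd3 : St ≠ W) (hd4 : N ≠ Q) (hd5 : N ≠ W)
    (hd6 : Q ≠ W)
    (hNS : τ N = St) (hWQ : μ W = Q)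
    (q q' w w' : List (S' → S'))
    (hq : Concise T q St) (hq' : Concise T q' N)
    (hw : Concise T w N) (hw' : Concise T w' St)
    (hqQ : mApply q St = Q) (hq'Q : mApply q' N = Q)
    (hwW : mApply w N = W) (hw'W : mApply w' St = W) :
    τ = μ ↔ q.length + w.length + 2 = q'.length + w'.length := by
  obtain ⟨hqm, hqc, hqs, hqn⟩ := hq
  obtain ⟨hq'm, hq'c, hq's, hq'n⟩ := hq'
  obtain ⟨hwm, hwc, hws, hwn⟩ := hw
  obtain ⟨hw'm, hw'c, hw's, hw'n⟩ := hw'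
  obtain ⟨u, hu, huN⟩ := hM.2.1 Q N (Ne.symm hd4)
  obtain ⟨v, hv, hvN⟩ := hM.2.1 W N (Ne.symm hd5)
  obtain ⟨s, hs, hsS⟩ := hM.2.1 W St (Ne.symm hd3)
  obtain ⟨hum, huc, hus, hun⟩ := hu
  obtain ⟨hvm, hvc, hvs, hvn⟩ := hv
  obtain ⟨hsm, hsc, hss, hsn⟩ := hs
  obtain ⟨ρμ, hρμT, hμρ, hρμv⟩ := exists_reverse hM hμ (Ne.symm hd6) hWQ
  have hρμQ : ρμ Q = W := (hμρ W Q (Ne.symm hd6)).mp hWQ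
  obtain ⟨ρτ, hρτT, hτρ, hρτv⟩ := exists_reverse hM hτ (Ne.symm hd1) hNS
  have Oμ : ∀ z, IsReverse μ z → z = ρμ := fun z h => reverse_unique h hμρ
  have Oρμ : ∀ z, IsReverse ρμ z → z = μ := fun z h => reverse_unique h hρμv
  have Oτ : ∀ z, IsReverse τ z → z = ρτ := fun z h => reverse_unique h hτρ
  have Oρτ : ∀ z, IsReverse ρτ z → z = τ := fun z h => reverse_unique h hρτv
  have hEQu := twoblock hM hq'm hq'c hq's hum huc (by rw [hq'Q]; exact hus)
      (by rw [hq'Q]; exact huN)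
  have hEQv := twoblock hM hwm hwc hws hvm hvc (by rw [hwW]; exact hvs)
      (by rw [hwW]; exact hvN)
  have hEQs := twoblock hM hw'm hw'c hw's hsm hsc (by rw [hw'W]; exact hss)
      (by rw [hw'W]; exact hsS)
  constructor
  · intro hτμ
    subst hτμ
    have hτw : τ ∉ w := by
      intro hmem
      have hmsg : IsMsg T (w ++ τ :: u) := isMsg_append hwm (isMsg_cons hτ hum)
      have hse : StepwiseEff (w ++ τ :: u) N := by
        apply se_append hws
        rw [hwW]
        exact ⟨by rw [hWQ]; exact hd6, by rw [hWQ]; exact hus⟩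
      have hret : mApply (w ++ τ :: u) N = N := by
        rw [mApply_append, hwW, mApply_cons, hWQ]; exact huN
      exact twocopy hM hmsg hwc hwn hun hse hret hmem Oτ
    have hρτQ : ρτ Q = W := (hτρ W Q (Ne.symm hd6)).mp hWQ
    have hρτq : ρτ ∉ q := by
      intro hmem
      have hmsg : IsMsg T (q ++ ρτ :: s) := isMsg_append hqm (isMsg_cons hρτT hsm)
      have hse : StepwiseEff (q ++ ρτ :: s) St := by
        apply se_append hqs
        rw [hqQ]
        exact ⟨by rw [hρτQ]; exact Ne.symm hd6, by rw [hρτQ]; exact hss⟩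
      have hret : mApply (q ++ ρτ :: s) St = St := by
        rw [mApply_append, hqQ, mApply_cons, hρτQ]; exact hsS
      exact twocopy hM hmsg hqc hqn hsn hse hret hmem Oρτ
    have hF3 : q'.length = q.length + 1 := by
      have hmsg : IsMsg T (τ :: (q ++ u)) := isMsg_cons hτ (isMsg_append hqm hum)
      have hse : StepwiseEff (τ :: (q ++ u)) N := by
        refine ⟨by rw [hNS]; exact hd1, ?_⟩
        rw [hNS]
        exact se_append hqs (by rw [hqQ]; exact hus)
      have hret : mApply (τ :: (q ++ u)) N = N := by
        rw [mApply_cons, hNS, mApply_append, hqQ]; exact huN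
      rcases triblock_front hM hmsg hqc huc hse hret Oτ with ⟨hmem, _⟩ | ⟨_, hlen2⟩
      · exact absurd hmem hρτq
      · have := hEQu.1
        omega
    have hF4 : w'.length = w.length + 1 := by
      have hmsg : IsMsg T (τ :: (w' ++ v)) := isMsg_cons hτ (isMsg_append hw'm hvm)
      have hse : StepwiseEff (τ :: (w' ++ v)) N := by
        refine ⟨by rw [hNS]; exact hd1, ?_⟩
        rw [hNS]
        exact se_append hw's (by rw [hw'W]; exact hvs)
      have hret : mApply (τ :: (w' ++ v)) N = N := by
        rw [mApply_cons, hNS, mApply_append, hw'W]; exact hvN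
      rcases triblock_front hM hmsg hw'c hvc hse hret Oτ with ⟨_, hlen2⟩ | ⟨hmem, _⟩
      · have := hEQv.1
        omega
      · obtain ⟨y, hyw, hyr, _⟩ := hEQv.2.2 ρτ hmem
        rw [Oρτ y hyr] at hyw
        exact absurd hyw hτw
    omega
  · intro hlen
    have hmsg3 : IsMsg T (q ++ ρμ :: s) := isMsg_append hqm (isMsg_cons hρμT hsm)
    have hse3 : StepwiseEff (q ++ ρμ :: s) St := by
      apply se_append hqs
      rw [hqQ]
      exact ⟨by rw [hρμQ]; exact Ne.symm hd6, by rw [hρμQ]; exact hss⟩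
    have hret3 : mApply (q ++ ρμ :: s) St = St := by
      rw [mApply_append, hqQ, mApply_cons, hρμQ]; exact hsS
    have hD3 := triblock_mid hM hmsg3 hqc hsc hse3 hret3 Oρμ
    have hmsg4 : IsMsg T (q' ++ ρμ :: v) := isMsg_append hq'm (isMsg_cons hρμT hvm)
    have hse4 : StepwiseEff (q' ++ ρμ :: v) N := by
      apply se_append hq's
      rw [hq'Q]
      exact ⟨by rw [hρμQ]; exact Ne.symm hd6, by rw [hρμQ]; exact hvs⟩
    have hret4 : mApply (q' ++ ρμ :: v) N = N := by
      rw [mApply_append, hq'Q, mApply_cons, hρμQ]; exact hvN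
    have hD4 := triblock_mid hM hmsg4 hq'c hvc hse4 hret4 Oρμ
    rcases hD3 with ⟨_, hl3⟩ | ⟨hμs, hl3⟩
    · exfalso
      have h1 := hEQu.1
      have h2 := hEQv.1
      have h3 := hEQs.1
      rcases hD4 with ⟨_, hl4⟩ | ⟨_, hl4⟩ <;> omega
    · obtain ⟨y, hyw', hyr, _⟩ := hEQs.2.2 μ hμs
      rw [Oμ y hyr] at hyw'
      have hmsg5 : IsMsg T (τ :: (w' ++ v)) := isMsg_cons hτ (isMsg_append hw'm hvm)
      have hse5 : StepwiseEff (τ :: (w' ++ v)) N := by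
        refine ⟨by rw [hNS]; exact hd1, ?_⟩
        rw [hNS]
        exact se_append hw's (by rw [hw'W]; exact hvs)
      have hret5 : mApply (τ :: (w' ++ v)) N = N := by
        rw [mApply_cons, hNS, mApply_append, hw'W]; exact hvN
      rcases mempair hM hmsg5 hw'c hse5 hret5 hyw' Oρμ with hμτ | hμv
      · exact hμτ.symm
      · exfalso
        obtain ⟨y2, hy2w, hy2r, _⟩ := hEQv.2.2 μ hμv
        rw [Oμ y2 hy2r] at hy2w
        have hmsg6 : IsMsg T (w ++ μ :: u) := isMsg_append hwm (isMsg_cons hμ hum)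
        have hse6 : StepwiseEff (w ++ μ :: u) N := by
          apply se_append hws
          rw [hwW]
          exact ⟨by rw [hWQ]; exact hd6, by rw [hWQ]; exact hus⟩
        have hret6 : mApply (w ++ μ :: u) N = N := by
          rw [mApply_append, hwW, mApply_cons, hWQ]; exact huN
        have hD := double_mid hM hmsg6 hwc huc hse6 hret6 hy2w Oμ Oρμ hμρ
        have h1 := hEQu.1
        have h3 := hEQs.1
        omega
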